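/- For fixed 0 < x₀ < x₁, the function f(C) = (2/C⁴)(F(Cx₁) − F(Cx₀)) is strictly increasing on the interval 0 < C ≤ 1/x₁, where F(u) = ∫₀^u z⁶/√(1−z⁶) dz. -/

import Mathlib

open Real Set MeasureTheory

noncomputable section

/-- F(u) = ∫₀ᵘ z⁶/√(1−z⁶) dz. -/
def Fgeo (u : ℝ) : ℝ := ∫ z in (0 : ℝ)..u, z ^ 6 / Real.sqrt (1 - z ^ 6)

namespace Stmt13Aux

/-- the integrand -/
def g (z : ℝ) : ℝ := z ^ 6 / Real.sqrt (1 - z ^ 6)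

lemma g_meas : Measurable g := by
  unfold g
  exact (measurable_id.pow_const 6).div
    (Real.continuous_sqrt.measurable.comp (measurable_const.sub (measurable_id.pow_const 6)))

lemma g_nonneg (z : ℝ) : 0 ≤ g z := by
  unfold g
  positivity

lemma g_int01 : IntervalIntegrable g volume 0 1 := by
  have hbound : IntervalIntegrable (fun z : ℝ => (1 - z) ^ (-(1/2) : ℝ)) volume 0 1 := by
    have := (intervalIntegral.intervalIntegrable_rpow' (a := (0:ℝ)) (b := 1)
      (r := (-(1/2) : ℝ)) (by norm_num)).comp_sub_left 1
    simpa using this.symm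
  rw [intervalIntegrable_iff_integrableOn_Ioc_of_le (by norm_num)]
  rw [intervalIntegrable_iff_integrableOn_Ioc_of_le (by norm_num)] at hbound
  refine hbound.mono' g_meas.aestronglyMeasurable.restrict ?_
  filter_upwards [ae_restrict_mem measurableSet_Ioc] with z hz
  obtain ⟨hz0, hz1⟩ := hz
  rw [Real.norm_eq_abs, abs_of_nonneg (g_nonneg z)]
  rcases eq_or_lt_of_le hz1 with h1 | h1
  · subst h1
    norm_num [g, Real.zero_rpow]
  · have hzz : z ^ 6 ≤ z := pow_le_of_le_one hz0.le h1.le (by norm_num)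
    have h6 : z ^ 6 < 1 := pow_lt_one₀ hz0.le h1 (by norm_num)
    have hsq : Real.sqrt (1 - z) ≤ Real.sqrt (1 - z ^ 6) := by
      apply Real.sqrt_le_sqrt; linarith
    have hsqp : 0 < Real.sqrt (1 - z) := Real.sqrt_pos.2 (by linarith)
    have hle : g z ≤ 1 / Real.sqrt (1 - z) := by
      unfold g
      exact div_le_div₀ (by norm_num) (pow_le_one₀ hz0.le h1.le) hsqp hsq
    calc g z ≤ 1 / Real.sqrt (1 - z) := hle
      _ = (1 - z) ^ (-(1/2) : ℝ) := by
          rw [Real.rpow_neg (by linarith), ← Real.sqrt_eq_rpow, one_div]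

lemma g_int {a b : ℝ} (ha : 0 ≤ a) (hb : b ≤ 1) (hab : a ≤ b) :
    IntervalIntegrable g volume a b := by
  apply g_int01.mono_set
  rw [uIcc_of_le hab, uIcc_of_le (by norm_num : (0:ℝ) ≤ 1)]
  exact Icc_subset_Icc ha hb

end Stmt13Aux

open Stmt13Aux

/-- for fixed 0 < x₀ < x₁, the function
C ↦ (2/C⁴)(F(Cx₁) − F(Cx₀)) is strictly increasing on (0, 1/x₁]. -/
theorem stmt13 (x₀ x₁ : ℝ) (h0 : 0 < x₀) (h01 : x₀ < x₁) :
    StrictMonoOn (fun C : ℝ => (2 / C ^ 4) * (Fgeo (C * x₁) - Fgeo (C * x₀)))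
      (Set.Ioc 0 x₁⁻¹) := by
  have hx1 : 0 < x₁ := h0.trans h01
  set K : ℝ → ℝ := fun C => ∫ t in x₀..x₁, t ^ 6 / Real.sqrt (1 - (C * t) ^ 6) with hKdef
  -- basic facts for C in the interval
  have hCx1 : ∀ C ∈ Set.Ioc (0:ℝ) x₁⁻¹, C * x₁ ≤ 1 := by
    intro C hC
    have : C * x₁ ≤ x₁⁻¹ * x₁ := by
      apply mul_le_mul_of_nonneg_right hC.2 hx1.le
    rwa [inv_mul_cancel₀ hx1.ne'] at this
  have hgi2 : ∀ C ∈ Set.Ioc (0:ℝ) x₁⁻¹,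
      IntervalIntegrable g volume (C * x₀) (C * x₁) := by
    intro C hC
    exact g_int (mul_nonneg hC.1.le h0.le) (hCx1 C hC)
      (mul_le_mul_of_nonneg_left h01.le hC.1.le)
  -- integrability of the K-integrand
  have hKint : ∀ C ∈ Set.Ioc (0:ℝ) x₁⁻¹,
      IntervalIntegrable (fun t => t ^ 6 / Real.sqrt (1 - (C * t) ^ 6)) volume x₀ x₁ := by
    intro C hC
    have h1 := (hgi2 C hC).comp_mul_left (c := C)
    rw [mul_div_cancel_left₀ _ hC.1.ne', mul_div_cancel_left₀ _ hC.1.ne'] at h1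
    have h2 := h1.const_mul ((C ^ 6)⁻¹)
    have heq : (fun t => (C ^ 6)⁻¹ * g (C * t))
        = fun t => t ^ 6 / Real.sqrt (1 - (C * t) ^ 6) := by
      funext t
      simp only [g, mul_pow, mul_div_assoc]
      rw [inv_mul_cancel_left₀ (pow_ne_zero 6 hC.1.ne')]
    rwa [heq] at h2
  -- key identity : f C = 2 C³ K C
  have key : ∀ C ∈ Set.Ioc (0:ℝ) x₁⁻¹,
      (2 / C ^ 4) * (Fgeo (C * x₁) - Fgeo (C * x₀)) = 2 * C ^ 3 * K C := by
    intro C hC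
    have hgi1 : IntervalIntegrable g volume 0 (C * x₀) :=
      g_int le_rfl (le_trans (mul_le_mul_of_nonneg_left h01.le hC.1.le) (hCx1 C hC))
        (mul_nonneg hC.1.le h0.le)
    have hadj := intervalIntegral.integral_add_adjacent_intervals hgi1 (hgi2 C hC)
    have hdiff : Fgeo (C * x₁) - Fgeo (C * x₀) = ∫ z in (C * x₀)..(C * x₁), g z := by
      unfold Fgeo
      have e1 : (∫ z in (0:ℝ)..(C*x₁), z ^ 6 / Real.sqrt (1 - z ^ 6))
          = ∫ z in (0:ℝ)..(C*x₁), g z := rfl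
      have e2 : (∫ z in (0:ℝ)..(C*x₀), z ^ 6 / Real.sqrt (1 - z ^ 6))
          = ∫ z in (0:ℝ)..(C*x₀), g z := rfl
      rw [e1, e2]
      linarith [hadj]
    have hsub : (∫ z in (C * x₀)..(C * x₁), g z) = C * ∫ t in x₀..x₁, g (C * t) := by
      rw [← intervalIntegral.smul_integral_comp_mul_left g C, smul_eq_mul]
    have hKeq : (∫ t in x₀..x₁, g (C * t)) = C ^ 6 * K C := by
      have : ∀ t : ℝ, g (C * t) = C ^ 6 * (t ^ 6 / Real.sqrt (1 - (C * t) ^ 6)) := by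
        intro t; simp [g, mul_pow, mul_div_assoc]
      simp_rw [this]
      rw [intervalIntegral.integral_const_mul, hKdef]
    rw [hdiff, hsub, hKeq, div_mul_eq_mul_div, div_eq_iff (pow_ne_zero 4 hC.1.ne')]
    ring
  -- now prove strict monotonicity
  intro a ha b hb hab
  simp only
  rw [key a ha, key b hb]
  have hax1 : a * x₁ < 1 := by
    have : a * x₁ < x₁⁻¹ * x₁ :=
      mul_lt_mul_of_pos_right (lt_of_lt_of_le hab hb.2) hx1
    rwa [inv_mul_cancel₀ hx1.ne'] at this
  -- K a > 0
  have hKa_pos : 0 < K a := by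
    apply intervalIntegral.intervalIntegral_pos_of_pos_on (hKint a ha) _ h01
    intro t ht
    have ht0 : 0 < t := h0.trans ht.1
    have hat : a * t < 1 := by
      calc a * t ≤ a * x₁ := mul_le_mul_of_nonneg_left ht.2.le ha.1.le
        _ < 1 := hax1
    have h6 : (a * t) ^ 6 < 1 := pow_lt_one₀ (mul_nonneg ha.1.le ht0.le) hat (by norm_num)
    have hsq : 0 < Real.sqrt (1 - (a * t) ^ 6) := Real.sqrt_pos.2 (by linarith)
    exact div_pos (pow_pos ht0 6) hsq
  -- K a ≤ K b
  have hKab : K a ≤ K b := by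
    apply intervalIntegral.integral_mono_ae_restrict h01.le (hKint a ha) (hKint b hb)
    have hne : ∀ᵐ t ∂(volume.restrict (Set.Icc x₀ x₁)), t ≠ x₁ := by
      refine ae_restrict_of_ae ?_
      rw [ae_iff]
      simp only [ne_eq, not_not, setOf_eq_eq_singleton]
      exact measure_singleton x₁
    filter_upwards [hne, ae_restrict_mem measurableSet_Icc] with t ht1 ht2
    have ht0 : 0 < t := h0.trans_le ht2.1
    have htx1 : t < x₁ := lt_of_le_of_ne ht2.2 ht1
    have hbt : b * t < 1 := by
      have h1 : b * t < b * x₁ := mul_lt_mul_of_pos_left htx1 (ha.1.trans hab)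
      have h2 : b * x₁ ≤ 1 := hCx1 b hb
      linarith
    have h6b : (b * t) ^ 6 < 1 := pow_lt_one₀ (mul_nonneg (ha.1.trans hab).le (h0.trans_le ht2.1).le) hbt (by norm_num)
    have h6ab : (a * t) ^ 6 ≤ (b * t) ^ 6 := by
      apply pow_le_pow_left₀ (mul_nonneg ha.1.le ht0.le)
      exact mul_le_mul_of_nonneg_right hab.le ht0.le
    have hsqb : 0 < Real.sqrt (1 - (b * t) ^ 6) := Real.sqrt_pos.2 (by linarith)
    have hsqle : Real.sqrt (1 - (b * t) ^ 6) ≤ Real.sqrt (1 - (a * t) ^ 6) :=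
      Real.sqrt_le_sqrt (by linarith)
    exact div_le_div_of_nonneg_left (by positivity) hsqb hsqle
  have h3 : a ^ 3 < b ^ 3 := pow_lt_pow_left₀ hab ha.1.le (by norm_num)
  calc 2 * a ^ 3 * K a < 2 * b ^ 3 * K a := by
        apply mul_lt_mul_of_pos_right _ hKa_pos
        linarith
    _ ≤ 2 * b ^ 3 * K b := by
        apply mul_le_mul_of_nonneg_left hKab
        nlinarith [pow_pos (ha.1.trans hab) 3]
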